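/- Let (A,·) be the semigroup K-algebra of the rectangular band I×J. A bilinear product * on A is a (12)-matching structure on (A,·) (i.e. * is associative and (12)-matching with ·) if and only if * is associative and there exist λ ∈ K and elements r_{il} ∈ Ann(A), for (i,l) ∈ I×J, such that e_{ij} * e_{kl} = λe_{il} + r_{il} for all (i,j),(k,l) ∈ I×J. -/

import Mathlib

/-- For the semigroup algebra `(A, ·)` of the rectangular band `I × J` over a field `K`,
a bilinear product `*` on `A` is a `(12)`-matching structure on `(A, ·)` if and only if
`*` is associative and there exist `λ ∈ K` and elements `r_{il} ∈ Ann(A)` such that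
`e_{ij} * e_{kl} = λ • e_{il} + r_{il}` for all `(i,j), (k,l) ∈ I × J`. -/
theorem twelve_matching_structures_on_rectangular_band {K A I J : Type*} [Field K]
    [NonUnitalRing A] [Module K A] [SMulCommClass K A A] [IsScalarTower K A A]
    [Nonempty I] [Nonempty J]
    (e : Module.Basis (I × J) K A)
    (hmul : ∀ (i k : I) (j l : J), e (i, j) * e (k, l) = e (i, l))
    (star : A →ₗ[K] A →ₗ[K] A) :
    ((∀ a b c : A, star (star a b) c = star a (star b c)) ∧
      (∀ a b c : A, star a b * c = a * star b c) ∧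
      (∀ a b c : A, star (a * b) c = star a (b * c))) ↔
    ((∀ a b c : A, star (star a b) c = star a (star b c)) ∧
      ∃ (lam : K) (r : I → J → A),
        (∀ (i : I) (l : J), ∀ b : A, r i l * b = 0 ∧ b * r i l = 0) ∧
        ∀ (i k : I) (j l : J),
          star (e (i, j)) (e (k, l)) = lam • e (i, l) + r i l) := by
  classical
  obtain ⟨i₀⟩ := ‹Nonempty I›
  obtain ⟨j₀⟩ := ‹Nonempty J›
  -- helper: a linear functional vanishing on the basis vanishes
  have zeroOnBasisK : ∀ (f : A →ₗ[K] K),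
      (∀ p : I × J, f (e p) = 0) → ∀ x : A, f x = 0 := by
    intro f h x
    have hf : f = 0 := Module.Basis.ext e (by simpa using h)
    simp [hf]
  have zeroOnBasis : ∀ (f : A →ₗ[K] ((I × J) →₀ K)),
      (∀ p : I × J, f (e p) = 0) → ∀ x : A, f x = 0 := by
    intro f h x
    have hf : f = 0 := Module.Basis.ext e (by simpa using h)
    simp [hf]
  have zeroOnBasisA : ∀ (f : A →ₗ[K] A),
      (∀ p : I × J, f (e p) = 0) → ∀ x : A, f x = 0 := by
    intro f h x
    have hf : f = 0 := Module.Basis.ext e (by simpa using h)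
    simp [hf]
  -- scalar cancellation on a basis vector
  have hc : ∀ (x : I × J) (a b : K), a • e x = b • e x → a = b := by
    intro x a b h
    have := congrArg (fun z => e.repr z x) h
    simpa using this
  constructor
  · rintro ⟨h0, h1, h2⟩
    refine ⟨h0, ?_⟩
    -- support lemmas
    have reprL : ∀ (i : I) (j : J) (x : A) (p : I) (q : J), p ≠ i →
        e.repr (e (i, j) * x) (p, q) = 0 := by
      intro i j x p q hp
      have := zeroOnBasisK ((Finsupp.lapply ((p, q) : I × J)).comp
          ((e.repr : A →ₗ[K] ((I × J) →₀ K)).comp (LinearMap.mulLeft K (e (i, j)))))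
        (by
          rintro ⟨k, l⟩
          simp [LinearMap.mulLeft_apply, hmul, Finsupp.single_apply, (Ne.symm hp)]) x
      simpa using this
    have reprR : ∀ (m : I) (n : J) (x : A) (p : I) (q : J), q ≠ n →
        e.repr (x * e (m, n)) (p, q) = 0 := by
      intro m n x p q hq
      have := zeroOnBasisK ((Finsupp.lapply ((p, q) : I × J)).comp
          ((e.repr : A →ₗ[K] ((I × J) →₀ K)).comp (LinearMap.mulRight K (e (m, n)))))
        (by
          rintro ⟨k, l⟩
          simp [LinearMap.mulRight_apply, hmul, Finsupp.single_apply, (Ne.symm hq)]) x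
      simpa using this
    -- star on the basis only depends on (i, l)
    set s : I → J → A := fun i l => star (e (i, j₀)) (e (i₀, l)) with hs_def
    have hs : ∀ (i k : I) (j l : J), star (e (i, j)) (e (k, l)) = s i l := by
      intro i k j l
      have h' := h2 (e (i, j₀)) (e (i₀, j)) (e (k, l))
      rw [hmul, hmul] at h'
      exact h'
    set u : I → J → A := fun i n => e (i, j₀) * s i₀ n with hu_def
    have relU : ∀ (i : I) (l : J) (m : I) (n : J), s i l * e (m, n) = u i n := by
      intro i l m n
      have h' := h1 (e (i, j₀)) (e (i₀, l)) (e (m, n))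
      rw [hs i i₀ j₀ l, hs i₀ m l n] at h'
      exact h'
    have uR : ∀ (i : I) (n : J), u i n = s i j₀ * e (i₀, n) := by
      intro i n; rw [relU]
    have relV : ∀ (m : I) (n : J) (i : I) (l : J), e (m, n) * s i l = u m l := by
      intro m n i l
      have h' := h1 (e (m, n)) (e (i, j₀)) (e (i₀, l))
      rw [hs m i n j₀, hs i i₀ j₀ l, relU] at h'
      exact h'.symm
    -- u i n is a multiple of e (i, n)
    have huv : ∀ (i : I) (n : J), u i n = (e.repr (u i n) (i, n)) • e (i, n) := by
      intro i n
      apply e.repr.injective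
      ext ⟨p, q⟩
      rcases eq_or_ne p i with rfl | hp
      · rcases eq_or_ne q n with rfl | hq
        · simp
        · rw [uR, reprR i₀ n _ _ _ hq]
          simp [Finsupp.single_apply, hq, Ne.symm hq]
      · rw [hu_def]
        simp only
        rw [reprL i j₀ _ p q hp]
        simp [Finsupp.single_apply, hp, (Ne.symm hp)]
    set μ : I → J → K := fun i n => e.repr (u i n) (i, n) with hμ_def
    have uM1 : ∀ (i n p q), u i n * e (p, q) = u i q := by
      intro i n p q
      rw [uR, uR, mul_assoc, hmul]
    have uM2 : ∀ (i n p q), e (p, q) * u i n = u p n := by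
      intro i n p q
      rw [hu_def]
      simp only
      rw [← mul_assoc, hmul]
    have hμcol : ∀ (i : I) (n q : J), μ i n = μ i q := by
      intro i n q
      apply hc (i, q)
      have : u i n * e (i₀, q) = u i q := uM1 i n i₀ q
      rw [huv i n, huv i q, smul_mul_assoc, hmul] at this
      exact this
    have hμrow : ∀ (i p : I) (n : J), μ i n = μ p n := by
      intro i p n
      apply hc (p, n)
      have : e (p, j₀) * u i n = u p n := uM2 i n p j₀
      rw [huv i n, huv p n, mul_smul_comm, hmul] at this
      exact this
    have hμconst : ∀ (i : I) (n : J), μ i n = μ i₀ j₀ := by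
      intro i n
      rw [hμrow i i₀ n, hμcol i₀ n j₀]
    refine ⟨μ i₀ j₀, fun i l => s i l - (μ i₀ j₀) • e (i, l), ?_, ?_⟩
    · intro i l b
      constructor
      · refine zeroOnBasisA (LinearMap.mulLeft K (s i l - (μ i₀ j₀) • e (i, l))) ?_ b
        rintro ⟨m, n⟩
        show (s i l - (μ i₀ j₀) • e (i, l)) * e (m, n) = 0
        rw [sub_mul, smul_mul_assoc, hmul, relU, huv i n,
          show e.repr (u i n) (i, n) = μ i₀ j₀ from hμconst i n, sub_self]
      · refine zeroOnBasisA (LinearMap.mulRight K (s i l - (μ i₀ j₀) • e (i, l))) ?_ b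
        rintro ⟨m, n⟩
        show e (m, n) * (s i l - (μ i₀ j₀) • e (i, l)) = 0
        rw [mul_sub, mul_smul_comm, hmul, relV, huv m l,
          show e.repr (u m l) (m, l) = μ i₀ j₀ from hμconst m l, sub_self]
    · intro i k j l
      rw [hs i k j l]
      show s i l = μ i₀ j₀ • e (i, l) + (s i l - μ i₀ j₀ • e (i, l))
      abel
  · rintro ⟨h0, lam, r, hr, hform⟩
    have ext3 : ∀ (f g : A →ₗ[K] A →ₗ[K] A →ₗ[K] A),
        (∀ p q c : I × J, f (e p) (e q) (e c) = g (e p) (e q) (e c)) →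
        ∀ a b c : A, f a b c = g a b c := by
      intro f g h a b c
      have hfg : f = g :=
        Module.Basis.ext e fun p => Module.Basis.ext e fun q => Module.Basis.ext e fun c => h p q c
      rw [hfg]
    refine ⟨h0, ?_, ?_⟩
    · intro a b c
      have := ext3 (star.compr₂ (LinearMap.mul K A))
        (((LinearMap.llcomp K A A A).comp (LinearMap.mul K A)).compl₂ star)
        (by
          rintro ⟨p1, p2⟩ ⟨q1, q2⟩ ⟨c1, c2⟩
          simp only [LinearMap.compr₂_apply, LinearMap.compl₂_apply,
            LinearMap.llcomp_apply, LinearMap.comp_apply, LinearMap.mul_apply']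
          rw [hform p1 q1 p2 q2, hform q1 c1 q2 c2]
          simp [add_mul, mul_add, smul_mul_assoc, mul_smul_comm, hmul,
            (hr p1 q2 (e (c1, c2))).1, (hr q1 c2 (e (p1, p2))).2])
        a b c
      simpa only [LinearMap.compr₂_apply, LinearMap.compl₂_apply,
        LinearMap.llcomp_apply, LinearMap.comp_apply, LinearMap.mul_apply'] using this
    · intro a b c
      have := ext3 ((LinearMap.mul K A).compr₂ star)
        (((LinearMap.llcomp K A A A).comp star).compl₂ (LinearMap.mul K A))
        (by
          rintro ⟨p1, p2⟩ ⟨q1, q2⟩ ⟨c1, c2⟩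
          simp only [LinearMap.compr₂_apply, LinearMap.compl₂_apply,
            LinearMap.llcomp_apply, LinearMap.comp_apply, LinearMap.mul_apply']
          rw [hmul, hmul, hform p1 c1 q2 c2, hform p1 q1 p2 c2])
        a b c
      simpa only [LinearMap.compr₂_apply, LinearMap.compl₂_apply,
        LinearMap.llcomp_apply, LinearMap.comp_apply, LinearMap.mul_apply'] using this
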